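/- Let Q = (0,1)^d, r ∈ (0,1), and f(x) = x₁^{−1} χ_Q(x). Then f ∈ L^r(ℝ^d) (in particular f lies in the Wiener amalgam space W^r(ω,𝓑) for any moderate weight ω and invariant QBF space 𝓑), but f ∉ L¹_loc(ℝ^d); hence f does not define a distribution, so W^r(ω,𝓑) is not contained in the space of (tempered, or Gelfand–Shilov) distributions when r < 1. -/

import Mathlib

noncomputable section
open MeasureTheory
open scoped ENNReal

/-- The function `f(x) = x₁^{−1} χ_{(0,1)^d}(x)` on ℝ^d. -/
def badFun (d : ℕ) (hd : 0 < d) : (Fin d → ℝ) → ℝ :=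
  Set.indicator {x : Fin d → ℝ | ∀ i, 0 < x i ∧ x i < 1} fun x => (x ⟨0, hd⟩)⁻¹

section aux

variable {d : ℕ} {hd : 0 < d}

lemma cube_eq (d : ℕ) :
    {x : Fin d → ℝ | ∀ i, 0 < x i ∧ x i < 1} = Set.pi Set.univ (fun _ => Set.Ioo (0:ℝ) 1) := by
  ext x; simp [Set.mem_pi, Set.mem_Ioo]

lemma cube_meas (d : ℕ) : MeasurableSet {x : Fin d → ℝ | ∀ i, 0 < x i ∧ x i < 1} := by
  rw [cube_eq]
  exact MeasurableSet.univ_pi fun _ => measurableSet_Ioo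

lemma badFun_meas (d : ℕ) (hd : 0 < d) : Measurable (badFun d hd) :=
  ((measurable_pi_apply _).inv).indicator (cube_meas d)

lemma badFun_nonneg (d : ℕ) (hd : 0 < d) (x : Fin d → ℝ) : 0 ≤ badFun d hd x := by
  unfold badFun
  by_cases hx : x ∈ {x : Fin d → ℝ | ∀ i, 0 < x i ∧ x i < 1}
  · rw [Set.indicator_of_mem hx]
    exact (inv_nonneg).mpr (hx ⟨0, hd⟩).1.le
  · rw [Set.indicator_of_notMem hx]

end aux

/-- for `0 < r < 1`, `f(x) = x₁^{−1} χ_{(0,1)^d}(x)` belongs to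
`L^r(ℝ^d)` but is not locally integrable, so it does not define a distribution. -/
theorem stmt17 (d : ℕ) (hd : 0 < d) (r : ℝ) (hr0 : 0 < r) (hr1 : r < 1) :
    MemLp (badFun d hd) (ENNReal.ofReal r) (volume : Measure (Fin d → ℝ)) ∧
    ¬ LocallyIntegrable (badFun d hd) (volume : Measure (Fin d → ℝ)) := by
  set i0 : Fin d := ⟨0, hd⟩
  set S := {x : Fin d → ℝ | ∀ i, 0 < x i ∧ x i < 1} with hS
  constructor
  · -- Memℒp
    have hp0 : (ENNReal.ofReal r) ≠ 0 := by simp [ENNReal.ofReal_eq_zero, not_le, hr0]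
    have hpt : (ENNReal.ofReal r) ≠ ∞ := ENNReal.ofReal_ne_top
    have hmeas : AEStronglyMeasurable (badFun d hd) volume :=
      (badFun_meas d hd).aestronglyMeasurable
    rw [← memLp_norm_rpow_iff hmeas hp0 hpt, ENNReal.div_self hp0 hpt,
      memLp_one_iff_integrable]
    have htor : (ENNReal.ofReal r).toReal = r := ENNReal.toReal_ofReal hr0.le
    rw [htor]
    -- the function equals a product of one-variable integrable functions
    set g : Fin d → ℝ → ℝ := fun i =>
      Set.indicator (Set.Ioo (0:ℝ) 1) (fun t => if i = i0 then |t|⁻¹ ^ r else 1) with hg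
    have key : (fun x : Fin d → ℝ => ‖badFun d hd x‖ ^ r) = fun x => ∏ i, g i (x i) := by
      funext x
      by_cases hx : x ∈ S
      · have : badFun d hd x = (x i0)⁻¹ := Set.indicator_of_mem hx _
        rw [this]
        have : ∀ i, g i (x i) = if i = i0 then |x i|⁻¹ ^ r else 1 := fun i =>
          Set.indicator_of_mem (Set.mem_Ioo.mpr (hx i)) _
        simp only [this]
        rw [Finset.prod_ite_eq' Finset.univ i0 (fun i => |x i|⁻¹ ^ r)]
        simp [Real.norm_eq_abs, abs_inv]
      · have h0 : badFun d hd x = 0 := Set.indicator_of_notMem hx _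
        rw [h0]
        simp only [hS, Set.mem_setOf_eq, not_forall] at hx
        obtain ⟨i, hi⟩ := hx
        have : g i (x i) = 0 := by
          apply Set.indicator_of_notMem
          simpa [Set.mem_Ioo] using hi
        rw [norm_zero, Real.zero_rpow hr0.ne']
        exact (Finset.prod_eq_zero (Finset.mem_univ i) this).symm
    rw [key]
    apply MeasureTheory.Integrable.fintype_prod (𝕜 := ℝ)
    intro i
    rw [hg, integrable_indicator_iff measurableSet_Ioo]
    by_cases hi : i = i0
    · simp only [hi, if_pos rfl]
      have : Set.EqOn (fun t : ℝ => |t|⁻¹ ^ r) (fun t : ℝ => t ^ (-r)) (Set.Ioo 0 1) := by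
        intro t ht
        simp only
        rw [abs_of_pos ht.1, Real.inv_rpow ht.1.le, ← Real.rpow_neg ht.1.le]
      apply (integrableOn_congr_fun this measurableSet_Ioo).mpr
      exact (intervalIntegral.integrableOn_Ioo_rpow_iff zero_lt_one).mpr (by linarith)
    · simp only [if_neg hi]
      exact (integrableOn_const_iff).mpr (Or.inr (by simp [Real.volume_Ioo]))
  · -- not LocallyIntegrable
    intro hloc
    have hK : IntegrableOn (badFun d hd) (Set.Icc (0:Fin d → ℝ) 1) volume :=
      hloc.integrableOn_isCompact isCompact_Icc
    have hsupp : Function.support (badFun d hd) ⊆ Set.Icc (0:Fin d → ℝ) 1 := by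
      refine (Set.support_indicator_subset).trans ?_
      intro x hx
      exact Set.mem_Icc.mpr ⟨fun i => (hx i).1.le, fun i => (hx i).2.le⟩
    have hint : Integrable (badFun d hd) volume :=
      (integrableOn_iff_integrable_of_support_subset hsupp).mp hK
    have hfin : ∫⁻ x, ENNReal.ofReal (badFun d hd x) ∂volume < ∞ := by
      rw [← hasFiniteIntegral_iff_ofReal (Filter.Eventually.of_forall (badFun_nonneg d hd))]
      exact hint.hasFiniteIntegral
    -- dyadic boxes
    set B : ℕ → Set (Fin d → ℝ) := fun n =>
      Set.pi Set.univ (fun i =>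
        if i = i0 then Set.Ioo ((1/2:ℝ)^(n+1)) ((1/2:ℝ)^n) else Set.Ioo (0:ℝ) 1) with hB
    have hBmeas : ∀ n, MeasurableSet (B n) := by
      intro n
      exact MeasurableSet.univ_pi fun i => by split <;> exact measurableSet_Ioo
    have hBsub : ∀ n, B n ⊆ S := by
      intro n x hx i
      have hxi := hx i (Set.mem_univ i)
      dsimp only at hxi
      by_cases hi : i = i0
      · rw [if_pos hi] at hxi
        refine ⟨lt_of_le_of_lt (by positivity) hxi.1, lt_of_lt_of_le hxi.2 ?_⟩
        exact pow_le_one₀ (by norm_num) (by norm_num)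
      · rw [if_neg hi] at hxi
        exact hxi
    have hBlb : ∀ n, ∀ x ∈ B n, (2:ℝ)^n ≤ badFun d hd x := by
      intro n x hx
      have hx0 := hx i0 (Set.mem_univ i0)
      dsimp only at hx0
      rw [if_pos rfl] at hx0
      have hpos : 0 < x i0 := lt_of_le_of_lt (by positivity) hx0.1
      have h1 : badFun d hd x = (x i0)⁻¹ := Set.indicator_of_mem (hBsub n hx) _
      rw [h1]
      have h2 : ((1/2:ℝ)^n)⁻¹ ≤ (x i0)⁻¹ := inv_anti₀ hpos hx0.2.le
      calc (2:ℝ)^n = ((1/2:ℝ)^n)⁻¹ := by rw [← inv_pow]; norm_num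
        _ ≤ (x i0)⁻¹ := h2
    have hBvol : ∀ n, volume (B n) = ENNReal.ofReal ((1/2:ℝ)^(n+1)) := by
      intro n
      rw [hB]
      rw [volume_pi_pi]
      have : ∀ i : Fin d, volume (if i = i0 then Set.Ioo ((1/2:ℝ)^(n+1)) ((1/2:ℝ)^n)
          else Set.Ioo (0:ℝ) 1) =
          if i = i0 then ENNReal.ofReal ((1/2:ℝ)^n - (1/2:ℝ)^(n+1)) else 1 := by
        intro i
        split <;> simp [Real.volume_Ioo]
      simp only [this]
      rw [Finset.prod_ite_eq' Finset.univ i0 (fun _ => ENNReal.ofReal ((1/2:ℝ)^n - (1/2:ℝ)^(n+1)))]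
      have h12 : (1/2:ℝ)^n - (1/2:ℝ)^(n+1) = (1/2:ℝ)^(n+1) := by ring
      rw [if_pos (Finset.mem_univ i0), h12]
    have hBdisj : Pairwise (Function.onFun Disjoint B) := by
      intro m n hmn
      rw [Function.onFun, Set.disjoint_left]
      intro x hxm hxn
      have h1 := hxm i0 (Set.mem_univ i0); dsimp only at h1; rw [if_pos rfl] at h1
      have h2 := hxn i0 (Set.mem_univ i0); dsimp only at h2; rw [if_pos rfl] at h2
      rcases hmn.lt_or_gt with h | h
      · have : (1/2:ℝ)^n ≤ (1/2:ℝ)^(m+1) :=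
          pow_le_pow_of_le_one (by norm_num) (by norm_num) h
        linarith [h1.1, h2.2]
      · have : (1/2:ℝ)^m ≤ (1/2:ℝ)^(n+1) :=
          pow_le_pow_of_le_one (by norm_num) (by norm_num) h
        linarith [h1.2, h2.1]
    have hlow : ∀ n, ENNReal.ofReal (1/2 : ℝ) ≤
        ∫⁻ x in B n, ENNReal.ofReal (badFun d hd x) ∂volume := by
      intro n
      calc ENNReal.ofReal (1/2 : ℝ)
          = ENNReal.ofReal ((2:ℝ)^n) * ENNReal.ofReal ((1/2:ℝ)^(n+1)) := by
            rw [← ENNReal.ofReal_mul (by positivity)]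
            congr 1
            rw [pow_succ, ← mul_assoc, ← mul_pow]
            norm_num
        _ = ∫⁻ _ in B n, ENNReal.ofReal ((2:ℝ)^n) ∂volume := by
            rw [setLIntegral_const, hBvol n]
        _ ≤ ∫⁻ x in B n, ENNReal.ofReal (badFun d hd x) ∂volume :=
            setLIntegral_mono' (hBmeas n) fun x hx =>
              ENNReal.ofReal_le_ofReal (hBlb n x hx)
    have htop : (∫⁻ x, ENNReal.ofReal (badFun d hd x) ∂volume) = ∞ := by
      rw [eq_top_iff]
      calc (∞ : ℝ≥0∞) = ∑' _ : ℕ, ENNReal.ofReal (1/2 : ℝ) := by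
            rw [ENNReal.tsum_const_eq_top_of_ne_zero (by simp)]
        _ ≤ ∑' n : ℕ, ∫⁻ x in B n, ENNReal.ofReal (badFun d hd x) ∂volume :=
            ENNReal.tsum_le_tsum hlow
        _ = ∫⁻ x in ⋃ n, B n, ENNReal.ofReal (badFun d hd x) ∂volume :=
            (lintegral_iUnion hBmeas hBdisj _).symm
        _ ≤ ∫⁻ x, ENNReal.ofReal (badFun d hd x) ∂volume :=
            setLIntegral_le_lintegral _ _
    rw [htop] at hfin
    exact lt_irrefl _ hfin
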